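/- arXiv:2104.13317 — 2 statements merged into one kernel-verified Lean document; each statement's English description precedes it below -/
import Mathlib

section
/- Let L∞ > 0, A∞, K∞ be real constants, and suppose L, A : (0,∞) → ℝ satisfy L(R) = L∞·sinh R − K∞·e^{−R} + o(e^{−R}) and A(R) = L∞·cosh R + A∞ + o(e^{−R}) as R → ∞. If moreover L(R)² ≥ (2·L(R)·A(R))/sinh R + A(R)² for all sufficiently large R, then −L∞ ≥ A∞. -/
open Filter Asymptotics

theorem aux_tendsto_cosh_atTop : Tendsto Real.cosh atTop atTop := by
  apply tendsto_atTop_mono (fun x => ?_)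
    (Real.tendsto_exp_atTop.atTop_div_const (by norm_num : (0:ℝ) < 2))
  rw [Real.cosh_eq]
  have := (Real.exp_pos (-x)).le
  linarith

theorem aux_tendsto_sinh_atTop : Tendsto Real.sinh atTop atTop := by
  apply tendsto_atTop_mono' _ _
    ((Real.tendsto_exp_atTop.atTop_add (tendsto_const_nhds (x := (-1:ℝ)))).atTop_div_const
      (by norm_num : (0:ℝ) < 2))
  filter_upwards [eventually_ge_atTop (0 : ℝ)] with x hx
  rw [Real.sinh_eq]
  have h1 : Real.exp (-x) ≤ 1 := Real.exp_le_one_iff.2 (by linarith)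
  linarith

/-- The asymptotic step in the renormalized area inequality: if
`L(R) = L∞ sinh R − K∞ e^{−R} + o(e^{−R})`, `A(R) = L∞ cosh R + A∞ + o(e^{−R})`
and `L(R)² ≥ 2 L(R) A(R)/sinh R + A(R)²` for all large `R`, then `−L∞ ≥ A∞`. -/
theorem renormalized_area_inequality_step (L A : ℝ → ℝ) (Linf Ainf Kinf : ℝ)
    (hL0 : 0 < Linf)
    (hL : (fun R => L R - (Linf * Real.sinh R - Kinf * Real.exp (-R)))
      =o[atTop] fun R => Real.exp (-R))
    (hA : (fun R => A R - (Linf * Real.cosh R + Ainf))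
      =o[atTop] fun R => Real.exp (-R))
    (hineq : ∀ᶠ R in atTop,
      2 * L R * A R / Real.sinh R + (A R) ^ 2 ≤ (L R) ^ 2) :
    -Linf ≥ Ainf := by
  by_contra hcon
  push_neg at hcon
  have hexp : Tendsto (fun R : ℝ => Real.exp (-R)) atTop (nhds 0) :=
    Real.tendsto_exp_atBot.comp tendsto_neg_atTop_atBot
  have heL : Tendsto (fun R => L R - (Linf * Real.sinh R - Kinf * Real.exp (-R)))
      atTop (nhds 0) := hL.isBigO.trans_tendsto hexp
  have heA : Tendsto (fun R => A R - (Linf * Real.cosh R + Ainf))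
      atTop (nhds 0) := hA.isBigO.trans_tendsto hexp
  have hic : Tendsto (fun R => (Real.cosh R)⁻¹) atTop (nhds 0) :=
    tendsto_inv_atTop_zero.comp aux_tendsto_cosh_atTop
  have his : Tendsto (fun R => (Real.sinh R)⁻¹) atTop (nhds 0) :=
    tendsto_inv_atTop_zero.comp aux_tendsto_sinh_atTop
  -- L - A tends to -Ainf
  have t1 : Tendsto (fun R => L R - A R) atTop (nhds (-Ainf)) := by
    have h0 : Tendsto (fun R => (L R - (Linf * Real.sinh R - Kinf * Real.exp (-R)))
        - (A R - (Linf * Real.cosh R + Ainf)) - (Linf + Kinf) * Real.exp (-R) - Ainf)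
        atTop (nhds (0 - 0 - (Linf + Kinf) * 0 - Ainf)) :=
      ((heL.sub heA).sub (hexp.const_mul _)).sub_const _
    rw [show (-Ainf : ℝ) = 0 - 0 - (Linf + Kinf) * 0 - Ainf by ring]
    exact h0.congr (fun R => by linear_combination Linf * Real.cosh_sub_sinh R)
  -- A / cosh tends to Linf
  have hAc : Tendsto (fun R => A R / Real.cosh R) atTop (nhds Linf) := by
    have h0 : Tendsto (fun R => (A R - (Linf * Real.cosh R + Ainf)) * (Real.cosh R)⁻¹
        + Linf + Ainf * (Real.cosh R)⁻¹) atTop (nhds (0 * 0 + Linf + Ainf * 0)) :=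
      ((heA.mul hic).add_const Linf).add (hic.const_mul Ainf)
    rw [show (Linf : ℝ) = 0 * 0 + Linf + Ainf * 0 by ring]
    exact h0.congr (fun R => by
      have hc : Real.cosh R ≠ 0 := (Real.cosh_pos R).ne'
      field_simp
      ring)
  -- L / sinh tends to Linf
  have hLs : Tendsto (fun R => L R / Real.sinh R) atTop (nhds Linf) := by
    have h0 : Tendsto (fun R => (L R - (Linf * Real.sinh R - Kinf * Real.exp (-R)))
        * (Real.sinh R)⁻¹ - Kinf * (Real.exp (-R) * (Real.sinh R)⁻¹) + Linf)
        atTop (nhds (0 * 0 - Kinf * (0 * 0) + Linf)) :=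
      ((heL.mul his).sub ((hexp.mul his).const_mul Kinf)).add_const Linf
    rw [show (Linf : ℝ) = 0 * 0 - Kinf * (0 * 0) + Linf by ring]
    apply h0.congr'
    filter_upwards [eventually_ge_atTop (1 : ℝ)] with R hR
    have hs : Real.sinh R ≠ 0 := (Real.sinh_pos_iff.2 (by linarith)).ne'
    field_simp
    ring
  -- (L + A)/cosh tends to 2 Linf
  have t2 : Tendsto (fun R => (L R + A R) / Real.cosh R) atTop (nhds (2 * Linf)) := by
    have h0 : Tendsto (fun R => (L R - A R) * (Real.cosh R)⁻¹ + 2 * (A R / Real.cosh R))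
        atTop (nhds ((-Ainf) * 0 + 2 * Linf)) := (t1.mul hic).add (hAc.const_mul 2)
    rw [show (2 * Linf : ℝ) = (-Ainf) * 0 + 2 * Linf by ring]
    exact h0.congr (fun R => by
      have hc : Real.cosh R ≠ 0 := (Real.cosh_pos R).ne'
      field_simp
      ring)
  -- the quotient of the inequality by cosh
  have hg : Tendsto (fun R => (L R - A R) * ((L R + A R) / Real.cosh R)
      - 2 * (L R / Real.sinh R) * (A R / Real.cosh R)) atTop
      (nhds ((-Ainf) * (2 * Linf) - 2 * Linf * Linf)) :=
    (t1.mul t2).sub ((hLs.const_mul 2).mul hAc)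
  have hev : ∀ᶠ R in atTop, (0 : ℝ) ≤ (L R - A R) * ((L R + A R) / Real.cosh R)
      - 2 * (L R / Real.sinh R) * (A R / Real.cosh R) := by
    filter_upwards [hineq, eventually_ge_atTop (1 : ℝ)] with R hR hR1
    have hs : (0 : ℝ) < Real.sinh R := Real.sinh_pos_iff.2 (by linarith)
    have hc : (0 : ℝ) < Real.cosh R := Real.cosh_pos R
    have key : (L R - A R) * ((L R + A R) / Real.cosh R)
        - 2 * (L R / Real.sinh R) * (A R / Real.cosh R)
        = ((L R) ^ 2 - (2 * L R * A R / Real.sinh R + (A R) ^ 2)) / Real.cosh R := by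
      field_simp
      ring
    rw [key]
    exact div_nonneg (by linarith) hc.le
  have hfin : (0 : ℝ) ≤ (-Ainf) * (2 * Linf) - 2 * Linf * Linf := ge_of_tendsto hg hev
  nlinarith [mul_pos hL0 (by linarith : (0 : ℝ) < Linf + Ainf)]
end

section
/- Let L∞ > 0, A∞, K∞ be real constants with A∞ = −L∞, and suppose L, A : (0,∞) → ℝ satisfy L(R) = L∞·sinh R − K∞·e^{−R} + o(e^{−R}) and A(R) = L∞·cosh R + A∞ + o(e^{−R}) as R → ∞, together with L(R)² ≥ (2·L(R)·A(R))/sinh R + A(R)² for all large R. Then K∞ ≤ 0. -/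
open Filter Asymptotics

set_option maxHeartbeats 1000000 in
/-- The rigidity step: under the same expansions with `A∞ = −L∞`, the cone
comparison inequality forces `K∞ ≤ 0`. -/
theorem renormalized_area_rigidity_step (L A : ℝ → ℝ) (Linf Ainf Kinf : ℝ)
    (hL0 : 0 < Linf) (hAinf : Ainf = -Linf)
    (hL : (fun R => L R - (Linf * Real.sinh R - Kinf * Real.exp (-R)))
      =o[atTop] fun R => Real.exp (-R))
    (hA : (fun R => A R - (Linf * Real.cosh R + Ainf))
      =o[atTop] fun R => Real.exp (-R))
    (hineq : ∀ᶠ R in atTop,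
      2 * L R * A R / Real.sinh R + (A R) ^ 2 ≤ (L R) ^ 2) :
    Kinf ≤ 0 := by
  subst hAinf
  -- renormalized error terms
  set a : ℝ → ℝ := fun R =>
    (L R - (Linf * Real.sinh R - Kinf * Real.exp (-R))) * Real.exp R with ha_def
  set b : ℝ → ℝ := fun R =>
    (A R - (Linf * Real.cosh R + -Linf)) * Real.exp R with hb_def
  set u : ℝ → ℝ := fun R => Real.exp (-R) with hu_def
  have hu0 : ∀ R, u R ≠ 0 := fun R => (Real.exp_pos _).ne'
  have ha0 : Tendsto a atTop (nhds 0) := by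
    have := (isLittleO_iff_tendsto (fun R h => absurd h (hu0 R))).mp hL
    refine this.congr fun R => ?_
    simp only [ha_def, hu_def, Real.exp_neg, div_eq_mul_inv, inv_inv]
  have hb0 : Tendsto b atTop (nhds 0) := by
    have := (isLittleO_iff_tendsto (fun R h => absurd h (hu0 R))).mp hA
    refine this.congr fun R => ?_
    simp only [hb_def, hu_def, Real.exp_neg, div_eq_mul_inv, inv_inv]
  have hut : Tendsto u atTop (nhds 0) := by
    simpa [hu_def] using Real.tendsto_exp_neg_atTop_nhds_zero
  -- the polynomial capturing f·(1-u²)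
  set F : ℝ × ℝ × ℝ → ℝ := fun p =>
    -(Linf*Kinf) - p.2.2*Linf + p.2.1*Linf + 2*p.1*Linf*Kinf - 2*p.1*p.2.1*Linf
    + p.1^2*Kinf^2 - 2*p.1^2*Linf*Kinf - p.1^2*p.2.2^2 - 2*p.1^2*p.2.1*Kinf
    + 2*p.1^2*p.2.1*Linf + p.1^2*p.2.1^2 + 2*p.1^3*Linf*Kinf + 4*p.1^3*p.2.2*Kinf
    - 2*p.1^3*p.2.1*Linf - 4*p.1^3*p.2.1*p.2.2 - p.1^4*Kinf^2 - p.1^4*Linf*Kinf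
    + p.1^4*p.2.2*Linf + p.1^4*p.2.2^2 + 2*p.1^4*p.2.1*Kinf + p.1^4*p.2.1*Linf
    - p.1^4*p.2.1^2 with hF_def
  have hFc : Continuous F := by fun_prop
  have hFt : Tendsto (fun R => F (u R, a R, b R)) atTop (nhds (-(Linf*Kinf))) := by
    have hp : Tendsto (fun R => (u R, a R, b R)) atTop
        (nhds ((0:ℝ), (0:ℝ), (0:ℝ))) := by
      rw [nhds_prod_eq, nhds_prod_eq]
      exact hut.prodMk (ha0.prodMk hb0)
    have := (hFc.tendsto (0, 0, 0)).comp hp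
    simpa [hF_def, Function.comp_def] using this
  -- the key algebraic identity
  have key : ∀ᶠ R in atTop,
      (L R ^ 2 - (2 * L R * A R / Real.sinh R + A R ^ 2)) * (1 - u R ^ 2)
        = F (u R, a R, b R) := by
    filter_upwards [eventually_gt_atTop (0:ℝ)] with R hR
    have hs : Real.sinh R ≠ 0 := (Real.sinh_pos_iff.mpr hR).ne'
    have hEv : Real.exp R * u R = 1 := by
      simp [hu_def, ← Real.exp_add]
    have hLa : L R = Linf * Real.sinh R - Kinf * u R + a R * u R := by
      have : a R * u R = L R - (Linf * Real.sinh R - Kinf * Real.exp (-R)) := by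
        simp only [ha_def, hu_def]
        calc (L R - (Linf * Real.sinh R - Kinf * Real.exp (-R))) * Real.exp R
              * Real.exp (-R)
            = (L R - (Linf * Real.sinh R - Kinf * Real.exp (-R)))
              * (Real.exp R * Real.exp (-R)) := by ring
          _ = _ := by rw [show Real.exp R * Real.exp (-R) = 1 from hEv]; ring
      simp only [hu_def] at this ⊢
      linarith [this]
    have hAb : A R = Linf * Real.cosh R - Linf + b R * u R := by
      have : b R * u R = A R - (Linf * Real.cosh R + -Linf) := by
        simp only [hb_def, hu_def]
        calc (A R - (Linf * Real.cosh R + -Linf)) * Real.exp R * Real.exp (-R)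
            = (A R - (Linf * Real.cosh R + -Linf))
              * (Real.exp R * Real.exp (-R)) := by ring
          _ = _ := by rw [show Real.exp R * Real.exp (-R) = 1 from hEv]; ring
      simp only [hu_def] at this ⊢
      linarith [this]
    have hsv : (Real.exp R - u R) / 2 ≠ 0 := by
      rw [show u R = Real.exp (-R) from rfl, ← Real.sinh_eq]; exact hs
    rw [hLa, hAb]
    simp only [hF_def]
    rw [Real.sinh_eq, Real.cosh_eq,
      show Real.exp (-R) = u R from rfl]
    revert hEv hsv
    generalize Real.exp R = E
    generalize u R = v
    generalize a R = x
    generalize b R = y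
    intro hEv hsv
    have hvE : E - v ≠ 0 := fun h => hsv (by rw [h]; norm_num)
    have e1 : ∀ P Q : ℝ, P^2 - (2*P*Q/((E - v)/2) + Q^2)
        = ((P^2 - Q^2)*((E - v)/2) - 2*P*Q)/((E - v)/2) := by
      intro P Q
      field_simp
      ring
    rw [e1, div_mul_eq_mul_div, div_eq_iff hsv]
    linear_combination (5/2*v*Linf*Kinf + 1/2*v*Linf^2 + 1/2*v*y*Linf
      - 5/2*v*x*Linf - 2*v^2*Linf*Kinf - 2*v^2*y*Kinf + 2*v^2*x*Linf
      + 2*v^2*x*y - 1/2*v^3*Linf*Kinf - 1/2*v^3*Linf^2 - 1/2*v^3*y*Linf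
      + 1/2*v^3*x*Linf - 1/2*E*Linf*Kinf - 1/2*E*Linf^2 - 1/2*E*y*Linf
      + 1/2*E*x*Linf + 1/2*E*v^2*Linf*Kinf + 1/2*E*v^2*Linf^2
      + 1/2*E*v^2*y*Linf - 1/2*E*v^2*x*Linf) * hEv
  -- pass to the limit
  have hfrac : Tendsto (fun R => F (u R, a R, b R) / (1 - u R ^ 2)) atTop
      (nhds (-(Linf*Kinf))) := by
    have hden : Tendsto (fun R => 1 - u R ^ 2) atTop (nhds 1) := by
      have := hut.pow 2
      have h2 : Tendsto (fun R => 1 - u R ^ 2) atTop (nhds (1 - 0^2)) :=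
        tendsto_const_nhds.sub (hut.pow 2)
      simpa using h2
    have := hFt.div hden one_ne_zero
    rw [div_one] at this
    exact this
  have hft : Tendsto (fun R => L R ^ 2 - (2 * L R * A R / Real.sinh R + A R ^ 2))
      atTop (nhds (-(Linf*Kinf))) := by
    refine hfrac.congr' ?_
    filter_upwards [key, eventually_gt_atTop (0:ℝ)] with R hk hR
    have hu1 : u R < 1 := by
      simpa [hu_def] using Real.exp_lt_one_iff.mpr (neg_neg_iff_pos.mpr hR)
    have hu0' : 0 < u R := Real.exp_pos _
    have hne : 1 - u R ^ 2 ≠ 0 := by nlinarith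
    rw [div_eq_iff hne]
    linarith [hk]
  have hge : 0 ≤ -(Linf * Kinf) := by
    refine ge_of_tendsto hft ?_
    filter_upwards [hineq] with R h
    linarith
  nlinarith
end
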